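/- Let (𝒢, g₁, g₂) be a twilled pre-Lie algebra with multiplication ∗ (so g₁ and g₂ are subalgebras), and let H: g₂ → g₁ be a linear map. Then the twisting of 𝒢 by H is again a twilled pre-Lie algebra (i.e. both g₁ and g₂ remain subalgebras) if and only if for all u, v ∈ g₂: H(u) ∗₁ H(v) + H(u) ∗₂ v + u ∗₂ H(v) = H(H(u) ∗₁ v + u ∗₁ H(v)) + H(u ∗₂ v), where ∗₁, ∗₂ denote the g₁- and g₂-components of the multiplication ∗ on 𝒢. -/
import Mathlib


/-- The pre-Lie identity for a multiplication on an additive group. -/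
def IsPreLieMul {A : Type*} [AddCommGroup A] (f : A → A → A) : Prop :=
  ∀ x y z : A, f (f x y) z - f x (f y z) = f (f y x) z - f y (f x z)

/-- Let `(𝒢 = g₁ ⊕ g₂, ∗)` be a twilled pre-Lie algebra (both `g₁`
and `g₂` are subalgebras) and `H : g₂ → g₁` linear.  The twisting of `𝒢` by `H`
(i.e. `a ∗^H b = e^{−Ĥ}(e^{Ĥ}a ∗ e^{Ĥ}b)`, `e^{Ĥ}(x,v) = (x + H v, v)`) is
again a twilled pre-Lie algebra iff for all `u, v ∈ g₂`:
`H(u)∗₁H(v) + H(u)∗₂v + u∗₂H(v) = H(H(u)∗₁v + u∗₁H(v)) + H(u∗₂v)`,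
where subscripts denote `g₁`/`g₂`-components of `∗` (`.1` is the `g₁`-component
and `.2` the `g₂`-component). -/
theorem twisted_twilled_iff_MaurerCartan
    {𝕜 G1 G2 : Type*} [Field 𝕜] [CharZero 𝕜]
    [AddCommGroup G1] [Module 𝕜 G1] [AddCommGroup G2] [Module 𝕜 G2]
    (m : (G1 × G2) →ₗ[𝕜] (G1 × G2) →ₗ[𝕜] (G1 × G2))
    (hm : IsPreLieMul fun a b => m a b)
    (hsub1 : ∀ x y : G1, (m (x, (0 : G2)) (y, 0)).2 = 0)
    (hsub2 : ∀ u v : G2, (m ((0 : G1), u) (0, v)).1 = 0)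
    (H : G2 →ₗ[𝕜] G1) :
    let e : G1 × G2 → G1 × G2 := fun p => (p.1 + H p.2, p.2)
    let em : G1 × G2 → G1 × G2 := fun p => (p.1 - H p.2, p.2)
    let mH : (G1 × G2) → (G1 × G2) → (G1 × G2) := fun a b => em (m (e a) (e b))
    ((∀ x y : G1, (mH (x, (0 : G2)) (y, 0)).2 = 0) ∧
     (∀ u v : G2, (mH ((0 : G1), u) (0, v)).1 = 0)) ↔
    (∀ u v : G2,
      (m (H u, (0 : G2)) (H v, 0)).1 + (m (H u, (0 : G2)) (0, v)).1 +
          (m ((0 : G1), u) (H v, 0)).1 =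
        H ((m (H u, (0 : G2)) (0, v)).2 + (m ((0 : G1), u) (H v, 0)).2) +
          H ((m ((0 : G1), u) (0, v)).2)) := by
  intro e em mH
  have key : ∀ u v : G2, (mH ((0 : G1), u) (0, v)).1 =
      ((m (H u, (0 : G2)) (H v, 0)).1 + (m (H u, (0 : G2)) (0, v)).1 +
          (m ((0 : G1), u) (H v, 0)).1) -
        (H ((m (H u, (0 : G2)) (0, v)).2 + (m ((0 : G1), u) (H v, 0)).2) +
          H ((m ((0 : G1), u) (0, v)).2)) := by
    intro u v
    have hu : ((H u : G1), u) = (H u, (0 : G2)) + ((0 : G1), u) := by simp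
    have hv : ((H v : G1), v) = (H v, (0 : G2)) + ((0 : G1), v) := by simp
    simp only [mH, em, e, zero_add]
    rw [hu, hv]
    simp only [map_add, LinearMap.add_apply, Prod.fst_add, Prod.snd_add, hsub1, hsub2, map_zero]
    abel
  constructor
  · rintro ⟨-, h2⟩ u v
    have := h2 u v
    rw [key u v, sub_eq_zero] at this
    exact this
  · intro hMC
    refine ⟨fun x y => ?_, fun u v => ?_⟩
    · simp only [mH, em, e, map_zero, add_zero]
      exact hsub1 x y
    · rw [key u v, sub_eq_zero]
      exact hMC u v
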